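/- arXiv:1303.2956 — 2 statements merged into one kernel-verified Lean document; each statement's English description precedes it below -/
import Mathlib

section
/- Let γ(u,t) be a one-parameter family of smooth partially null curves in E⁴₁ with speed v = ‖∂γ/∂u‖, partially null Frenet frame {T, N, B₁, B₂} with curvatures k₁, k₂ (and k₃ = 0), and flow ∂γ/∂t = β₁T + β₂N + β₃B₁ + β₄B₂. Then the flow is inextensible (i.e. ∂v/∂t = 0 for all u, t) if and only if ∂β₁/∂u = β₂ k₁ v. -/
/-!
Formalization of inextensible flows of partially null / pseudo null curves in
Minkowski space-time `E⁴₁` (ℝ⁴ with signature (-,+,+,+)).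
-/

noncomputable section

/-- The Minkowski bilinear form on `ℝ⁴` with signature `(-,+,+,+)`. -/
def mink (v w : Fin 4 → ℝ) : ℝ :=
  -(v 0 * w 0) + v 1 * w 1 + v 2 * w 2 + v 3 * w 3

/-- The Minkowski norm `‖v‖ = √|⟨v,v⟩|`. -/
def mnorm (v : Fin 4 → ℝ) : ℝ := Real.sqrt |mink v v|

lemma mink_comm (a b : Fin 4 → ℝ) : mink a b = mink b a := by simp [mink]; ring

lemma mink_smul_left (c : ℝ) (a b : Fin 4 → ℝ) : mink (c • a) b = c * mink a b := by
  simp [mink]; ring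

lemma mink_smul_right (c : ℝ) (a b : Fin 4 → ℝ) : mink a (c • b) = c * mink a b := by
  simp [mink]; ring

lemma mink_add_right (a b c : Fin 4 → ℝ) : mink a (b + c) = mink a b + mink a c := by
  simp [mink]; ring

lemma mink_zero_right (a : Fin 4 → ℝ) : mink a 0 = 0 := by simp [mink]

lemma hasDerivAt_mink {A B : ℝ → Fin 4 → ℝ} {A' B' : Fin 4 → ℝ} {t : ℝ}
    (hA : HasDerivAt A A' t) (hB : HasDerivAt B B' t) :
    HasDerivAt (fun x => mink (A x) (B x)) (mink A' (B t) + mink (A t) B') t := by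
  have hAi : ∀ i, HasDerivAt (fun x => A x i) (A' i) t := fun i => hasDerivAt_pi.1 hA i
  have hBi : ∀ i, HasDerivAt (fun x => B x i) (B' i) t := fun i => hasDerivAt_pi.1 hB i
  have h : HasDerivAt (fun x => -(A x 0 * B x 0) + A x 1 * B x 1 + A x 2 * B x 2 + A x 3 * B x 3)
      (mink A' (B t) + mink (A t) B') t := by
    have h0 := (hAi 0).mul (hBi 0)
    have h1 := (hAi 1).mul (hBi 1)
    have h2 := (hAi 2).mul (hBi 2)
    have h3 := (hAi 3).mul (hBi 3)
    convert ((h0.neg.add h1).add h2).add h3 using 1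
    · rfl
    · rfl
    · rfl
    simp [mink]; ring
  simpa [mink] using h

/-- Partial derivative in the first variable as a slice of the full derivative. -/
lemma slice_fst {F : Type*} [NormedAddCommGroup F] [NormedSpace ℝ F]
    {G : ℝ × ℝ → F} {L : ℝ × ℝ →L[ℝ] F} {u t : ℝ}
    (h : HasFDerivAt G L (u, t)) :
    HasDerivAt (fun x => G (x, t)) (L (1, 0)) u :=
  h.comp_hasDerivAt u ((hasDerivAt_id u).prodMk (hasDerivAt_const u t))

/-- Partial derivative in the second variable as a slice of the full derivative. -/
lemma slice_snd {F : Type*} [NormedAddCommGroup F] [NormedSpace ℝ F]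
    {G : ℝ × ℝ → F} {L : ℝ × ℝ →L[ℝ] F} {u t : ℝ}
    (h : HasFDerivAt G L (u, t)) :
    HasDerivAt (fun x => G (u, x)) (L (0, 1)) t :=
  h.comp_hasDerivAt t ((hasDerivAt_const t u).prodMk (hasDerivAt_id t))

lemma sliceDiff {F : Type*} [NormedAddCommGroup F] [NormedSpace ℝ F] {g : ℝ → ℝ → F}
    (hg : ContDiff ℝ (⊤ : ℕ∞) (fun p : ℝ × ℝ => g p.1 p.2)) (a b : ℝ) :
    DifferentiableAt ℝ (fun x => g x b) a :=
  ((hg.differentiable (by simp)).comp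
    (differentiable_id.prodMk (differentiable_const b))).differentiableAt

theorem inextensible_iff_partially_null
    (γ T N B₁ B₂ : ℝ → ℝ → (Fin 4 → ℝ))
    (v k₁ k₂ β₁ β₂ β₃ β₄ : ℝ → ℝ → ℝ)
    (hγsmooth : ContDiff ℝ (⊤ : ℕ∞) (fun p : ℝ × ℝ => γ p.1 p.2))
    (hTsmooth : ContDiff ℝ (⊤ : ℕ∞) (fun p : ℝ × ℝ => T p.1 p.2))
    (hNsmooth : ContDiff ℝ (⊤ : ℕ∞) (fun p : ℝ × ℝ => N p.1 p.2))
    (hB₁smooth : ContDiff ℝ (⊤ : ℕ∞) (fun p : ℝ × ℝ => B₁ p.1 p.2))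
    (hB₂smooth : ContDiff ℝ (⊤ : ℕ∞) (fun p : ℝ × ℝ => B₂ p.1 p.2))
    (hk₁smooth : ContDiff ℝ (⊤ : ℕ∞) (fun p : ℝ × ℝ => k₁ p.1 p.2))
    (hk₂smooth : ContDiff ℝ (⊤ : ℕ∞) (fun p : ℝ × ℝ => k₂ p.1 p.2))
    (hβ₁smooth : ContDiff ℝ (⊤ : ℕ∞) (fun p : ℝ × ℝ => β₁ p.1 p.2))
    (hβ₂smooth : ContDiff ℝ (⊤ : ℕ∞) (fun p : ℝ × ℝ => β₂ p.1 p.2))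
    (hβ₃smooth : ContDiff ℝ (⊤ : ℕ∞) (fun p : ℝ × ℝ => β₃ p.1 p.2))
    (hβ₄smooth : ContDiff ℝ (⊤ : ℕ∞) (fun p : ℝ × ℝ => β₄ p.1 p.2))
    (hTT : ∀ u t : ℝ, mink (T u t) (T u t) = 1)
    (hNN : ∀ u t : ℝ, mink (N u t) (N u t) = 1)
    (hB₁B₁ : ∀ u t : ℝ, mink (B₁ u t) (B₁ u t) = 0)
    (hB₂B₂ : ∀ u t : ℝ, mink (B₂ u t) (B₂ u t) = 0)
    (hB₁B₂ : ∀ u t : ℝ, mink (B₁ u t) (B₂ u t) = 1)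
    (hTN : ∀ u t : ℝ, mink (T u t) (N u t) = 0)
    (hTB₁ : ∀ u t : ℝ, mink (T u t) (B₁ u t) = 0)
    (hTB₂ : ∀ u t : ℝ, mink (T u t) (B₂ u t) = 0)
    (hNB₁ : ∀ u t : ℝ, mink (N u t) (B₁ u t) = 0)
    (hNB₂ : ∀ u t : ℝ, mink (N u t) (B₂ u t) = 0)
    -- speed, tangent and Frenet equations (∂/∂s = (1/v)∂/∂u, k₃ = 0)
    (hv : ∀ u t : ℝ, v u t = mnorm (deriv (fun x => γ x t) u))
    (hvpos : ∀ u t : ℝ, 0 < v u t)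
    (hT : ∀ u t : ℝ, deriv (fun x => γ x t) u = v u t • T u t)
    (hfr₁ : ∀ u t : ℝ, deriv (fun x => T x t) u = (v u t * k₁ u t) • N u t)
    (hfr₂ : ∀ u t : ℝ, deriv (fun x => N x t) u =
      (v u t * -(k₁ u t)) • T u t + (v u t * k₂ u t) • B₁ u t)
    (hfr₃ : ∀ u t : ℝ, deriv (fun x => B₁ x t) u = 0)
    (hfr₄ : ∀ u t : ℝ, deriv (fun x => B₂ x t) u = (v u t * -(k₂ u t)) • N u t)
    (hflow : ∀ u t : ℝ, deriv (fun x => γ u x) t =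
      β₁ u t • T u t + β₂ u t • N u t + β₃ u t • B₁ u t + β₄ u t • B₂ u t) :
    (∀ u t : ℝ, deriv (fun x => v u x) t = 0) ↔
      (∀ u t : ℝ, deriv (fun x => β₁ x t) u = β₂ u t * k₁ u t * v u t) := by
  suffices key : ∀ u t : ℝ, deriv (fun x => v u x) t =
      deriv (fun x => β₁ x t) u - β₂ u t * k₁ u t * v u t by
    constructor
    · intro h u t
      have k := key u t
      rw [h u t] at k
      linarith
    · intro h u t
      rw [key u t, h u t]
      ring
  intro u t
  set G : ℝ × ℝ → (Fin 4 → ℝ) := fun p => γ p.1 p.2 with hGdef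
  have hG : ContDiff ℝ (⊤ : ℕ∞) G := hγsmooth
  have hGd : Differentiable ℝ G := hG.differentiable (by simp)
  have hG'd : Differentiable ℝ (fderiv ℝ G) :=
    (hG.fderiv_right (m := (⊤ : ℕ∞)) (by exact_mod_cast le_top)).differentiable
      (by simp)
  set f'' := fderiv ℝ (fderiv ℝ G) (u, t) with hf''def
  have hf'' : HasFDerivAt (fderiv ℝ G) f'' (u, t) := (hG'd (u, t)).hasFDerivAt
  -- partial derivatives as slices of the full derivative
  have ha : ∀ a b : ℝ, deriv (fun x => γ x b) a = fderiv ℝ G (a, b) (1, 0) :=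
    fun a b => (slice_fst (hGd (a, b)).hasFDerivAt).deriv
  have ha2 : ∀ a b : ℝ, deriv (fun x => γ a x) b = fderiv ℝ G (a, b) (0, 1) :=
    fun a b => (slice_snd (hGd (a, b)).hasFDerivAt).deriv
  -- derivatives of the applied first derivatives
  have hF1 : HasFDerivAt (fun p : ℝ × ℝ => fderiv ℝ G p ((1 : ℝ), (0 : ℝ)))
      ((ContinuousLinearMap.apply ℝ (Fin 4 → ℝ) ((1 : ℝ), (0 : ℝ))).comp f'') (u, t) :=
    (ContinuousLinearMap.apply ℝ (Fin 4 → ℝ) ((1 : ℝ), (0 : ℝ))).hasFDerivAt.comp (u, t) hf''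
  have hF2 : HasFDerivAt (fun p : ℝ × ℝ => fderiv ℝ G p ((0 : ℝ), (1 : ℝ)))
      ((ContinuousLinearMap.apply ℝ (Fin 4 → ℝ) ((0 : ℝ), (1 : ℝ))).comp f'') (u, t) :=
    (ContinuousLinearMap.apply ℝ (Fin 4 → ℝ) ((0 : ℝ), (1 : ℝ))).hasFDerivAt.comp (u, t) hf''
  have hmix1 : HasDerivAt (fun x => fderiv ℝ G (u, x) ((1 : ℝ), (0 : ℝ)))
      (f'' (0, 1) (1, 0)) t := slice_snd hF1
  have hmix2 : HasDerivAt (fun x => fderiv ℝ G (x, t) ((0 : ℝ), (1 : ℝ)))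
      (f'' (1, 0) (0, 1)) u := slice_fst hF2
  have hsymm : f'' ((0 : ℝ), (1 : ℝ)) ((1 : ℝ), (0 : ℝ)) = f'' (1, 0) (0, 1) :=
    second_derivative_symmetric (fun y => (hGd y).hasFDerivAt) hf'' _ _
  -- u-derivative of the flow vector field
  have hb1 : HasDerivAt (fun x => β₁ x t) (deriv (fun x => β₁ x t) u) u :=
    (sliceDiff hβ₁smooth u t).hasDerivAt
  have hb2 : HasDerivAt (fun x => β₂ x t) (deriv (fun x => β₂ x t) u) u :=
    (sliceDiff hβ₂smooth u t).hasDerivAt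
  have hb3 : HasDerivAt (fun x => β₃ x t) (deriv (fun x => β₃ x t) u) u :=
    (sliceDiff hβ₃smooth u t).hasDerivAt
  have hb4 : HasDerivAt (fun x => β₄ x t) (deriv (fun x => β₄ x t) u) u :=
    (sliceDiff hβ₄smooth u t).hasDerivAt
  have hTd : HasDerivAt (fun x => T x t) ((v u t * k₁ u t) • N u t) u := by
    have h := (sliceDiff hTsmooth u t).hasDerivAt
    rwa [hfr₁ u t] at h
  have hNd : HasDerivAt (fun x => N x t)
      ((v u t * -(k₁ u t)) • T u t + (v u t * k₂ u t) • B₁ u t) u := by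
    have h := (sliceDiff hNsmooth u t).hasDerivAt
    rwa [hfr₂ u t] at h
  have hB1d : HasDerivAt (fun x => B₁ x t) 0 u := by
    have h := (sliceDiff hB₁smooth u t).hasDerivAt
    rwa [hfr₃ u t] at h
  have hB2d : HasDerivAt (fun x => B₂ x t) ((v u t * -(k₂ u t)) • N u t) u := by
    have h := (sliceDiff hB₂smooth u t).hasDerivAt
    rwa [hfr₄ u t] at h
  set W' : Fin 4 → ℝ :=
    (((β₁ u t • ((v u t * k₁ u t) • N u t) + deriv (fun x => β₁ x t) u • T u t) +
      (β₂ u t • ((v u t * -(k₁ u t)) • T u t + (v u t * k₂ u t) • B₁ u t) +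
        deriv (fun x => β₂ x t) u • N u t)) +
      (β₃ u t • (0 : Fin 4 → ℝ) + deriv (fun x => β₃ x t) u • B₁ u t)) +
      (β₄ u t • ((v u t * -(k₂ u t)) • N u t) + deriv (fun x => β₄ x t) u • B₂ u t)
    with hW'def
  have hW : HasDerivAt (fun x =>
      β₁ x t • T x t + β₂ x t • N x t + β₃ x t • B₁ x t + β₄ x t • B₂ x t) W' u :=
    (((hb1.smul hTd).add (hb2.smul hNd)).add (hb3.smul hB1d)).add (hb4.smul hB2d)
  have hFW : (fun x => fderiv ℝ G (x, t) ((0 : ℝ), (1 : ℝ))) =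
      (fun x => β₁ x t • T x t + β₂ x t • N x t + β₃ x t • B₁ x t + β₄ x t • B₂ x t) := by
    funext x
    rw [← ha2 x t, hflow x t]
  rw [hFW] at hmix2
  have huniq : f'' ((1 : ℝ), (0 : ℝ)) ((0 : ℝ), (1 : ℝ)) = W' := hmix2.unique hW
  -- the t-derivative of ∂γ/∂u is W'
  have hA : HasDerivAt (fun x => fderiv ℝ G (u, x) ((1 : ℝ), (0 : ℝ))) W' t := by
    rwa [hsymm, huniq] at hmix1
  -- value of ∂γ/∂u
  have hAval : ∀ x : ℝ, fderiv ℝ G (u, x) ((1 : ℝ), (0 : ℝ)) = v u x • T u x :=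
    fun x => by rw [← ha u x, hT u x]
  have hfval : ∀ x : ℝ, mink (fderiv ℝ G (u, x) ((1 : ℝ), (0 : ℝ)))
      (fderiv ℝ G (u, x) ((1 : ℝ), (0 : ℝ))) = v u x ^ 2 := by
    intro x
    rw [hAval x, mink_smul_left, mink_smul_right, hTT]
    ring
  -- derivative of the squared speed
  have hfd : HasDerivAt (fun x => mink (fderiv ℝ G (u, x) ((1 : ℝ), (0 : ℝ)))
      (fderiv ℝ G (u, x) ((1 : ℝ), (0 : ℝ))))
      (mink W' (fderiv ℝ G (u, t) ((1 : ℝ), (0 : ℝ))) +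
        mink (fderiv ℝ G (u, t) ((1 : ℝ), (0 : ℝ))) W') t := hasDerivAt_mink hA hA
  have hS : mink (fderiv ℝ G (u, t) ((1 : ℝ), (0 : ℝ))) W' =
      v u t * (deriv (fun x => β₁ x t) u - β₂ u t * k₁ u t * v u t) := by
    rw [hAval t, hW'def]
    simp only [mink_add_right, mink_smul_left, mink_smul_right, mink_zero_right,
      hTT, hTN, hTB₁, hTB₂]
    ring
  -- v as the square root of the squared speed
  have hveq : (fun x => v u x) = fun x =>
      Real.sqrt (mink (fderiv ℝ G (u, x) ((1 : ℝ), (0 : ℝ)))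
        (fderiv ℝ G (u, x) ((1 : ℝ), (0 : ℝ)))) := by
    funext x
    rw [hv u x, mnorm, ha u x, hfval x, abs_of_nonneg (sq_nonneg _)]
  have hne : mink (fderiv ℝ G (u, t) ((1 : ℝ), (0 : ℝ)))
      (fderiv ℝ G (u, t) ((1 : ℝ), (0 : ℝ))) ≠ 0 := by
    rw [hfval t]
    exact pow_ne_zero _ (hvpos u t).ne'
  have hsq : HasDerivAt (fun x => Real.sqrt (mink (fderiv ℝ G (u, x) ((1 : ℝ), (0 : ℝ)))
      (fderiv ℝ G (u, x) ((1 : ℝ), (0 : ℝ)))))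
      (1 / (2 * Real.sqrt (mink (fderiv ℝ G (u, t) ((1 : ℝ), (0 : ℝ)))
        (fderiv ℝ G (u, t) ((1 : ℝ), (0 : ℝ))))) *
        (mink W' (fderiv ℝ G (u, t) ((1 : ℝ), (0 : ℝ))) +
          mink (fderiv ℝ G (u, t) ((1 : ℝ), (0 : ℝ))) W')) t :=
    (Real.hasDerivAt_sqrt hne).comp t hfd
  rw [hveq, hsq.deriv]
  have hroot : Real.sqrt (mink (fderiv ℝ G (u, t) ((1 : ℝ), (0 : ℝ)))
      (fderiv ℝ G (u, t) ((1 : ℝ), (0 : ℝ)))) = v u t := by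
    rw [hfval t, Real.sqrt_sq (hvpos u t).le]
  rw [mink_comm W', hS, hroot]
  have hv0 : v u t ≠ 0 := (hvpos u t).ne'
  field_simp
  ring
end
end

section
/- Let γ(s,t) be an arclength-parametrized inextensible flow of partially null curves in E⁴₁ with partially null Frenet frame {T, N, B₁, B₂}, curvatures k₁, k₂ (k₃ = 0), flow ∂γ/∂t = β₁T + β₂N + β₃B₁ + β₄B₂ (so ∂β₁/∂s = β₂k₁), ψ₁ = ⟨∂N/∂t, B₁⟩ and ψ₃ = ⟨∂B₁/∂t, B₂⟩. If ψ₁ ≠ 0, then k₂ = (1/ψ₁) ∂ψ₃/∂s. -/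
/-!
Formalization of inextensible flows of partially null / pseudo null curves in
Minkowski space-time `E⁴₁` (ℝ⁴ with signature (-,+,+,+)).
-/

noncomputable section

lemma mink_symm (v w : Fin 4 → ℝ) : mink v w = mink w v := by
  simp [mink]; ring

lemma mink_hasDerivAt {f g : ℝ → Fin 4 → ℝ} {f' g' : Fin 4 → ℝ} {x : ℝ}
    (hf : HasDerivAt f f' x) (hg : HasDerivAt g g' x) :
    HasDerivAt (fun y => mink (f y) (g y)) (mink f' (g x) + mink (f x) g') x := by
  have hfi := fun i => hasDerivAt_pi.1 hf i
  have hgi := fun i => hasDerivAt_pi.1 hg i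
  have h := ((((hfi 0).mul (hgi 0)).neg.add ((hfi 1).mul (hgi 1))).add
      ((hfi 2).mul (hgi 2))).add ((hfi 3).mul (hgi 3))
  convert h using 1 <;> try rfl
  simp [mink]; ring

lemma diff_fst {F : ℝ → ℝ → (Fin 4 → ℝ)}
    (hF : ContDiff ℝ (⊤ : ℕ∞) (fun p : ℝ × ℝ => F p.1 p.2)) (t : ℝ) :
    Differentiable ℝ (fun x => F x t) := by
  have : ContDiff ℝ (⊤ : ℕ∞) (fun x : ℝ => F x t) :=
    hF.comp (contDiff_id.prodMk contDiff_const)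
  exact this.differentiable (by simp)

lemma diff_snd {F : ℝ → ℝ → (Fin 4 → ℝ)}
    (hF : ContDiff ℝ (⊤ : ℕ∞) (fun p : ℝ × ℝ => F p.1 p.2)) (s : ℝ) :
    Differentiable ℝ (fun y => F s y) := by
  have : ContDiff ℝ (⊤ : ℕ∞) (fun y : ℝ => F s y) :=
    hF.comp (contDiff_const.prodMk contDiff_id)
  exact this.differentiable (by simp)

theorem k2_formula_partially_null
    (γ T N B₁ B₂ : ℝ → ℝ → (Fin 4 → ℝ))
    (k₁ k₂ β₁ β₂ β₃ β₄ : ℝ → ℝ → ℝ)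
    (ψ₁ ψ₃ : ℝ → ℝ → ℝ)
    (hγsmooth : ContDiff ℝ (⊤ : ℕ∞) (fun p : ℝ × ℝ => γ p.1 p.2))
    (hTsmooth : ContDiff ℝ (⊤ : ℕ∞) (fun p : ℝ × ℝ => T p.1 p.2))
    (hNsmooth : ContDiff ℝ (⊤ : ℕ∞) (fun p : ℝ × ℝ => N p.1 p.2))
    (hB₁smooth : ContDiff ℝ (⊤ : ℕ∞) (fun p : ℝ × ℝ => B₁ p.1 p.2))
    (hB₂smooth : ContDiff ℝ (⊤ : ℕ∞) (fun p : ℝ × ℝ => B₂ p.1 p.2))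
    (hk₁smooth : ContDiff ℝ (⊤ : ℕ∞) (fun p : ℝ × ℝ => k₁ p.1 p.2))
    (hk₂smooth : ContDiff ℝ (⊤ : ℕ∞) (fun p : ℝ × ℝ => k₂ p.1 p.2))
    (hβ₁smooth : ContDiff ℝ (⊤ : ℕ∞) (fun p : ℝ × ℝ => β₁ p.1 p.2))
    (hβ₂smooth : ContDiff ℝ (⊤ : ℕ∞) (fun p : ℝ × ℝ => β₂ p.1 p.2))
    (hβ₃smooth : ContDiff ℝ (⊤ : ℕ∞) (fun p : ℝ × ℝ => β₃ p.1 p.2))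
    (hβ₄smooth : ContDiff ℝ (⊤ : ℕ∞) (fun p : ℝ × ℝ => β₄ p.1 p.2))
    (hTT : ∀ s t : ℝ, mink (T s t) (T s t) = 1)
    (hNN : ∀ s t : ℝ, mink (N s t) (N s t) = 1)
    (hB₁B₁ : ∀ s t : ℝ, mink (B₁ s t) (B₁ s t) = 0)
    (hB₂B₂ : ∀ s t : ℝ, mink (B₂ s t) (B₂ s t) = 0)
    (hB₁B₂ : ∀ s t : ℝ, mink (B₁ s t) (B₂ s t) = 1)
    (hTN : ∀ s t : ℝ, mink (T s t) (N s t) = 0)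
    (hTB₁ : ∀ s t : ℝ, mink (T s t) (B₁ s t) = 0)
    (hTB₂ : ∀ s t : ℝ, mink (T s t) (B₂ s t) = 0)
    (hNB₁ : ∀ s t : ℝ, mink (N s t) (B₁ s t) = 0)
    (hNB₂ : ∀ s t : ℝ, mink (N s t) (B₂ s t) = 0)
    -- arclength parametrization and Frenet equations (k₃ = 0)
    (hT : ∀ s t : ℝ, T s t = deriv (fun x => γ x t) s)
    (hunit : ∀ s t : ℝ, mnorm (deriv (fun x => γ x t) s) = 1)
    (hfr₁ : ∀ s t : ℝ, deriv (fun x => T x t) s = k₁ s t • N s t)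
    (hfr₂ : ∀ s t : ℝ, deriv (fun x => N x t) s = -(k₁ s t) • T s t + k₂ s t • B₁ s t)
    (hfr₃ : ∀ s t : ℝ, deriv (fun x => B₁ x t) s = 0)
    (hfr₄ : ∀ s t : ℝ, deriv (fun x => B₂ x t) s = -(k₂ s t) • N s t)
    (hflow : ∀ s t : ℝ, deriv (fun x => γ s x) t =
      β₁ s t • T s t + β₂ s t • N s t + β₃ s t • B₁ s t + β₄ s t • B₂ s t)
    -- inextensibility: ∂β₁/∂s = β₂k₁
    (hinext : ∀ s t : ℝ, deriv (fun x => β₁ x t) s = β₂ s t * k₁ s t)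
    (hψ₁ : ∀ s t : ℝ, ψ₁ s t = mink (deriv (fun x => N s x) t) (B₁ s t))
    (hψ₃ : ∀ s t : ℝ, ψ₃ s t = mink (deriv (fun x => B₁ s x) t) (B₂ s t)) :
    ∀ s t : ℝ, ψ₁ s t ≠ 0 →
      k₂ s t = (1 / ψ₁ s t) * deriv (fun x => ψ₃ x t) s := by
  intro s t hne
  -- B₁ is constant in the s-variable
  have hconst : ∀ x₁ x₂ tt : ℝ, B₁ x₁ tt = B₁ x₂ tt := fun x₁ x₂ tt =>
    is_const_of_deriv_eq_zero (diff_fst hB₁smooth tt) (fun x => hfr₃ x tt) x₁ x₂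
  -- the t-derivative of B₁ does not depend on s
  set V : Fin 4 → ℝ := deriv (fun y => B₁ s y) t with hV
  have hψ₃' : (fun x => ψ₃ x t) = fun x => mink V (B₂ x t) := by
    funext x
    rw [hψ₃ x t]
    congr 1
    rw [hV]
    congr 1
    funext y
    exact hconst x s y
  -- derivative of B₂ in s
  have hB₂d : HasDerivAt (fun x => B₂ x t) (-(k₂ s t) • N s t) s := by
    have h := ((diff_fst hB₂smooth t) s).hasDerivAt
    rwa [hfr₄ s t] at h
  -- derivative of ψ₃ in s
  have hder : HasDerivAt (fun x => ψ₃ x t)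
      (mink (0 : Fin 4 → ℝ) (B₂ s t) + mink V (-(k₂ s t) • N s t)) s := by
    rw [hψ₃']
    exact mink_hasDerivAt (hasDerivAt_const s V) hB₂d
  have hderiv : deriv (fun x => ψ₃ x t) s = -(k₂ s t) * mink V (N s t) := by
    rw [hder.deriv]
    simp [mink]
    ring
  -- relate mink V (N s t) to ψ₁ using ⟨N, B₁⟩ = 0
  have hNd : HasDerivAt (fun y => N s y) (deriv (fun y => N s y) t) t :=
    ((diff_snd hNsmooth s) t).hasDerivAt
  have hB₁d : HasDerivAt (fun y => B₁ s y) V t := ((diff_snd hB₁smooth s) t).hasDerivAt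
  have hzero : HasDerivAt (fun y => mink (N s y) (B₁ s y))
      (mink (deriv (fun y => N s y) t) (B₁ s t) + mink (N s t) V) t :=
    mink_hasDerivAt hNd hB₁d
  have hconst0 : HasDerivAt (fun y => mink (N s y) (B₁ s y)) 0 t := by
    have : (fun y => mink (N s y) (B₁ s y)) = fun _ => (0 : ℝ) := by
      funext y; exact hNB₁ s y
    rw [this]
    exact hasDerivAt_const t 0
  have hkey : mink (deriv (fun y => N s y) t) (B₁ s t) + mink (N s t) V = 0 :=
    hzero.unique hconst0
  have hVN : mink V (N s t) = -ψ₁ s t := by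
    rw [hψ₁ s t, mink_symm]
    linarith
  rw [hderiv, hVN]
  field_simp
end
end
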